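/- For n ≥ 2 and b ≥ 2, a prime p divides Φ_n(b) if and only if gcd(b, p) = 1 and n = p^γ · ord_p(b) for some γ ≥ 0. Moreover, for n ≥ 3 a prime divisor p of Φ_n(b) satisfies: if γ = 0 then n = ord_p(b), and if γ > 0 then ν_p(Φ_n(b)) = 1. -/

import Mathlib

/-- Multiplicative order of `b` modulo `n`. -/
noncomputable def ordn (b n : ℕ) : ℕ := orderOf (b : ZMod n)

/-- `n` is an overpseudoprime to base `b`: composite, coprime to `b`, and the
multiplicative order of `b` mod `d` is the same for all divisors `d > 1` of `n`. -/
def Overpsp (b n : ℕ) : Prop :=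
  1 < n ∧ ¬ n.Prime ∧ Nat.Coprime b n ∧
    ∀ d, d ∣ n → 1 < d → ordn b d = ordn b n

/-- `n` is primover to base `b`: prime or overpseudoprime to base `b`. -/
def Primover (b n : ℕ) : Prop := n.Prime ∨ Overpsp b n

/-- The cyclotomic coset of `2` modulo `n` containing `s`. -/
def coset (n s : ℕ) : Finset ℕ := (Finset.range n).image (fun k => 2 ^ k * s % n)

/-- The number of distinct cyclotomic cosets of `2` modulo `n`. -/
def numCosets (n : ℕ) : ℕ := ((Finset.Ioo 0 n).image (coset n)).card

/-- `Φ_N(b)` as a natural number. -/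
noncomputable def PhiN (N b : ℕ) : ℕ := ((Polynomial.cyclotomic N ℤ).eval (b : ℤ)).toNat

open Polynomial Finset

theorem aux_dvd_iff_root (N b p : ℕ) (hb : 2 ≤ b) (hp : p.Prime) :
    p ∣ PhiN N b ↔ (cyclotomic N (ZMod p)).IsRoot (b : ZMod p) := by
  haveI := Fact.mk hp
  have hint : (PhiN N b : ℤ) = (cyclotomic N ℤ).eval (b:ℤ) :=
    Int.toNat_of_nonneg (cyclotomic_nonneg N (by exact_mod_cast Nat.one_le_of_lt hb))
  have hcast : ((b : ℤ) : ZMod p) = (b : ZMod p) := by push_cast; rfl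
  rw [← Int.natCast_dvd_natCast, hint, ← ZMod.intCast_zmod_eq_zero_iff_dvd]
  rw [IsRoot.def, ← map_cyclotomic N (Int.castRingHom (ZMod p)), ← hcast, eval_intCast_map]
  rfl

theorem aux_ord_not_dvd (b p : ℕ) (hp : p.Prime) (hco : Nat.Coprime b p) :
    ordn b p ≠ 0 ∧ ¬ p ∣ ordn b p := by
  haveI := Fact.mk hp
  obtain ⟨u, hu⟩ := (ZMod.isUnit_iff_coprime b p).mpr hco
  have h1 : ordn b p = orderOf u := by rw [ordn, ← hu, orderOf_units]
  have h2 : orderOf u ∣ p - 1 := by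
    have := orderOf_dvd_card (x := u)
    rwa [ZMod.card_units_eq_totient, Nat.totient_prime hp] at this
  have h3 : orderOf u ≠ 0 := (orderOf_pos u).ne'
  have h4 : orderOf u ≤ p - 1 := Nat.le_of_dvd (by have := hp.two_le; omega) h2
  refine ⟨by rw [h1]; exact h3, ?_⟩
  rw [h1]
  intro hdvd
  have h5 := Nat.le_of_dvd (Nat.pos_of_ne_zero h3) hdvd
  have := hp.two_le
  omega

theorem aux_part1 (n b p : ℕ) (hn : 2 ≤ n) (hb : 2 ≤ b) (hp : p.Prime) :
    p ∣ PhiN n b ↔ Nat.Coprime b p ∧ ∃ γ : ℕ, n = p ^ γ * ordn b p := by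
  haveI := Fact.mk hp
  rw [aux_dvd_iff_root n b p hb hp]
  constructor
  · intro h
    set m := n / p ^ n.factorization p with hmdef
    have hm : ¬ p ∣ m := Nat.not_dvd_ordCompl hp (by omega)
    have hm0 : m ≠ 0 := (Nat.ordCompl_pos p (by omega : n ≠ 0)).ne'
    haveI : NeZero ((m : ZMod p)) :=
      ⟨by rw [Ne, ZMod.natCast_eq_zero_iff]; exact hm⟩
    rw [show n = p ^ n.factorization p * m from (Nat.ordProj_mul_ordCompl_eq_self n p).symm,
      isRoot_cyclotomic_prime_pow_mul_iff_of_charP] at h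
    refine ⟨?_, n.factorization p, ?_⟩
    · exact (ZMod.isUnit_iff_coprime b p).mp (IsUnit.of_pow_eq_one h.pow_eq_one hm0)
    · rw [show ordn b p = m from (h.eq_orderOf).symm]
      exact (Nat.ordProj_mul_ordCompl_eq_self n p).symm
  · rintro ⟨hco, γ, hγ⟩
    obtain ⟨hm0, hmp⟩ := aux_ord_not_dvd b p hp hco
    haveI : NeZero ((ordn b p : ZMod p)) :=
      ⟨by rw [Ne, ZMod.natCast_eq_zero_iff]; exact hmp⟩
    rw [hγ, isRoot_cyclotomic_prime_pow_mul_iff_of_charP]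
    exact IsPrimitiveRoot.orderOf (b : ZMod p)

theorem aux_phi_dvd_geom (n N b p : ℕ) (hb : 2 ≤ b) (hn : n = p * N) (hp : 2 ≤ p) (hN : 1 ≤ N) :
    ((cyclotomic n ℤ).eval (b:ℤ)) ∣ ∑ i ∈ Finset.range p, ((b:ℤ)^N)^i := by
  subst hn
  have hNn : N < p * N := by nlinarith
  have hn0 : 0 < p * N := by omega
  have hdvd : (X^N - 1) * cyclotomic (p*N) ℤ ∣ (X^(p*N) - 1 : ℤ[X]) := by
    rw [← prod_cyclotomic_eq_X_pow_sub_one hn0,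
      ← prod_cyclotomic_eq_X_pow_sub_one (by omega : 0 < N)]
    have hsub : N.divisors ⊆ (p*N).divisors :=
      Nat.divisors_subset_of_dvd (by omega) ⟨p, Nat.mul_comm p N⟩
    have h2 : cyclotomic (p*N) ℤ ∣ ∏ i ∈ (p*N).divisors \ N.divisors, cyclotomic i ℤ := by
      refine Finset.dvd_prod_of_mem _ ?_
      simp only [Finset.mem_sdiff, Nat.mem_divisors]
      refine ⟨⟨dvd_rfl, by omega⟩, fun hmem => ?_⟩
      have hle : p * N ≤ N := Nat.le_of_dvd (by omega) hmem.1
      omega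
    calc (∏ i ∈ N.divisors, cyclotomic i ℤ) * cyclotomic (p*N) ℤ
        = cyclotomic (p*N) ℤ * ∏ i ∈ N.divisors, cyclotomic i ℤ := mul_comm _ _
      _ ∣ (∏ i ∈ (p*N).divisors \ N.divisors, cyclotomic i ℤ) * ∏ i ∈ N.divisors, cyclotomic i ℤ :=
          mul_dvd_mul h2 dvd_rfl
      _ = ∏ i ∈ (p*N).divisors, cyclotomic i ℤ := Finset.prod_sdiff hsub
  obtain ⟨Q, hQ⟩ := hdvd
  refine ⟨Q.eval (b:ℤ), ?_⟩
  have hc1 : ((b:ℤ)^N - 1) ≠ 0 := by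
    have : (1:ℤ) < (b:ℤ)^N := one_lt_pow₀ (by exact_mod_cast hb) (by omega)
    omega
  apply mul_left_cancel₀ hc1
  have hgeo : (∑ i ∈ Finset.range p, ((b:ℤ)^N)^i) * ((b:ℤ)^N - 1) = ((b:ℤ)^N)^p - 1 :=
    geom_sum_mul _ p
  have heval := congrArg (eval (b:ℤ)) hQ
  simp only [eval_mul, eval_sub, eval_pow, eval_X, eval_one] at heval
  rw [pow_mul'] at heval
  linear_combination heval + hgeo

theorem aux_sq_not_dvd_odd (p : ℕ) (hp : p.Prime) (hodd : Odd p) (c : ℤ)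
    (h1 : (p:ℤ) ∣ c - 1) (hc : ¬(p:ℤ) ∣ c) :
    ¬ ((p:ℤ)^2 ∣ ∑ i ∈ Finset.range p, c^i) := by
  have := emultiplicity_geom_sum₂_eq_one (p := p) (x := c) (y := 1)
    (Nat.prime_iff_prime_int.mp hp) hodd (by simpa using h1) hc
  simp only [one_pow, mul_one] at this
  rw [← Nat.cast_one, emultiplicity_eq_coe] at this
  exact this.2

theorem stmt14 (n b p : ℕ) (hn : 2 ≤ n) (hb : 2 ≤ b) (hp : p.Prime) :
    (p ∣ PhiN n b ↔ Nat.Coprime b p ∧ ∃ γ : ℕ, n = p ^ γ * ordn b p) ∧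
    (3 ≤ n → p ∣ PhiN n b → n = ordn b p ∨ padicValNat p (PhiN n b) = 1) := by
  haveI := Fact.mk hp
  refine ⟨aux_part1 n b p hn hb hp, fun h3 hdvd => ?_⟩
  obtain ⟨hco, γ, hγ⟩ := (aux_part1 n b p hn hb hp).mp hdvd
  obtain ⟨hm0, hmp⟩ := aux_ord_not_dvd b p hp hco
  match γ, hγ with
  | 0, hγ => exact Or.inl (by simpa using hγ)
  | (γ'+1), hγ =>
  right
  set m := ordn b p with hmdef
  set N := p ^ γ' * m with hNdef
  have hp2 := hp.two_le
  have hppow : 1 ≤ p ^ γ' := Nat.one_le_pow _ _ (by omega)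
  have hN1 : 1 ≤ N := Nat.mul_pos hppow (by omega)
  have hnN : n = p * N := by rw [hγ, hNdef, pow_succ]; ring
  -- p does not divide b
  have hpb : ¬ p ∣ b := (Nat.Prime.coprime_iff_not_dvd hp).mp hco.symm
  have hpbz : ¬ (p:ℤ) ∣ (b:ℤ) := by exact_mod_cast hpb
  have hpc : ¬ (p:ℤ) ∣ (b:ℤ)^N := fun h =>
    hpbz ((Nat.prime_iff_prime_int.mp hp).dvd_of_dvd_pow h)
  -- p divides b^N - 1
  have hmN : m ∣ N := dvd_mul_left m _
  have hbN1 : ((b : ZMod p))^N = 1 := by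
    have := orderOf_dvd_iff_pow_eq_one.mp (hmdef ▸ hmN)
    exact this
  have hpc1 : (p:ℤ) ∣ (b:ℤ)^N - 1 := by
    have : (((b:ℤ)^N - 1 : ℤ) : ZMod p) = 0 := by
      push_cast
      rw [hbN1, sub_self]
    exact (ZMod.intCast_zmod_eq_zero_iff_dvd _ p).mp this
  -- Phi value facts
  have hΦint : (PhiN n b : ℤ) = (cyclotomic n ℤ).eval (b:ℤ) :=
    Int.toNat_of_nonneg (cyclotomic_nonneg n (by exact_mod_cast Nat.one_le_of_lt hb))
  have hΦpos : 0 < PhiN n b := by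
    have := cyclotomic_pos' (R := ℤ) n (by exact_mod_cast hb : (1:ℤ) < (b:ℤ))
    rw [PhiN]
    omega
  have hΦG : (PhiN n b : ℤ) ∣ ∑ i ∈ Finset.range p, ((b:ℤ)^N)^i := by
    rw [hΦint]
    exact aux_phi_dvd_geom n N b p hb hnN hp2 hN1
  -- p^2 does not divide the geometric sum
  have hsq : ¬ ((p:ℤ)^2 ∣ ∑ i ∈ Finset.range p, ((b:ℤ)^N)^i) := by
    by_cases hp2' : p = 2
    · subst hp2'
      -- m = 1, N is even
      have hmone : m = 1 := by
        have hb2 : (b : ZMod 2) = 1 := by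
          have hbm : b % 2 = 1 := by omega
          rw [← ZMod.natCast_mod, hbm, Nat.cast_one]
        rw [hmdef, ordn, hb2, orderOf_one]
      have hγ'pos : 1 ≤ γ' := by
        by_contra hc
        have : γ' = 0 := by omega
        subst this
        simp [hmone] at hγ
        omega
      have hNeven : ∃ k, N = k + k := by
        refine ⟨2^(γ'-1) * m, ?_⟩
        rw [hNdef]
        have : (2:ℕ)^γ' = 2 * 2^(γ'-1) := by
          conv_lhs => rw [show γ' = 1 + (γ'-1) by omega]
          rw [pow_add, pow_one]
        rw [this]
        ring
      obtain ⟨k, hk⟩ := hNeven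
      have hbodd : Odd (b:ℤ) := by
        rw [Int.odd_coe_nat]
        exact Nat.odd_iff.mpr (by omega)
      have hcsq : (b:ℤ)^N = ((b:ℤ)^k)^2 := by rw [← pow_mul, hk]; ring_nf
      have hmod : ((b:ℤ)^k)^2 % 4 = 1 := Int.sq_mod_four_eq_one_of_odd (hbodd.pow)
      intro hdvd4
      have hsum2 : ∑ i ∈ Finset.range 2, ((b:ℤ)^N)^i = 1 + (b:ℤ)^N := by
        rw [Finset.sum_range_succ, Finset.sum_range_one]
        ring
      rw [hsum2, hcsq] at hdvd4
      obtain ⟨t, ht⟩ := hdvd4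
      omega
    · exact aux_sq_not_dvd_odd p hp (hp.odd_of_ne_two hp2') _ hpc1 hpc
  -- conclude
  have hnsqΦ : ¬ p^2 ∣ PhiN n b := by
    intro h
    exact hsq (dvd_trans (by exact_mod_cast h) hΦG)
  have h1le : 1 ≤ padicValNat p (PhiN n b) := one_le_padicValNat_of_dvd hΦpos.ne' hdvd
  have hlt : padicValNat p (PhiN n b) < 2 := by
    by_contra hge
    exact hnsqΦ (dvd_trans (pow_dvd_pow p (by omega)) pow_padicValNat_dvd)
  omega
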